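/- Let U, X₁ⁿ, X₂ⁿ be jointly distributed random variables with U taking values in a finite set and each Xᵢⁿ = (X_{i,1},…,X_{i,n}) taking values in a finite product alphabet. Fix ε, δ > 0. If I(X₁ⁿ; X₂ⁿ | U) ≤ nδ, then there exists a set T ⊆ {1,…,n} with |T| ≤ nδ/ε such that for every t ∉ T, I(X_{1,t}; X_{2,t} | U, X₁^T, X₂^T) ≤ ε, where X_i^T denotes the tuple (X_{i,t})_{t∈T}. -/

import Mathlib

open scoped BigOperators Classical
set_option linter.unusedSectionVars false
set_option maxHeartbeats 1000000

/-- Probability that the random variable `A` takes the value `a`, under the pmf `p`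
on a finite sample space `Ω`. -/
noncomputable def prOf {Ω α : Type*} [Fintype Ω] (p : Ω → ℝ) (A : Ω → α) (a : α) : ℝ :=
  ∑ ω, if A ω = a then p ω else 0

/-- `p` is a probability mass function on the finite type `Ω`. -/
def IsPmf {Ω : Type*} [Fintype Ω] (p : Ω → ℝ) : Prop :=
  (∀ ω, 0 ≤ p ω) ∧ ∑ ω, p ω = 1

/-- Mutual information `I(A;B)` (base-2 logarithm) of random variables `A, B`
on a finite probability space `(Ω, p)`. -/
noncomputable def mutualInfo {Ω α β : Type*} [Fintype Ω] [Fintype α] [Fintype β]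
    (p : Ω → ℝ) (A : Ω → α) (B : Ω → β) : ℝ :=
  ∑ a, ∑ b, prOf p (fun ω => (A ω, B ω)) (a, b) *
    Real.logb 2 (prOf p (fun ω => (A ω, B ω)) (a, b) / (prOf p A a * prOf p B b))

/-- Conditional mutual information `I(A;B|C)` (base-2 logarithm). -/
noncomputable def condMutualInfo {Ω α β γ : Type*} [Fintype Ω] [Fintype α] [Fintype β]
    [Fintype γ] (p : Ω → ℝ) (A : Ω → α) (B : Ω → β) (C : Ω → γ) : ℝ :=
  ∑ a, ∑ b, ∑ c, prOf p (fun ω => (A ω, B ω, C ω)) (a, b, c) *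
    Real.logb 2 (prOf p (fun ω => (A ω, B ω, C ω)) (a, b, c) * prOf p C c /
      (prOf p (fun ω => (A ω, C ω)) (a, c) * prOf p (fun ω => (B ω, C ω)) (b, c)))

section PrOf
variable {Ω α β γ : Type*} [Fintype Ω] [Fintype α] [Fintype β] [Fintype γ] (p : Ω → ℝ)

theorem prOf_nonneg (hp : ∀ ω, 0 ≤ p ω) (A : Ω → α) (a : α) : 0 ≤ prOf p A a :=
  Finset.sum_nonneg fun ω _ => by split; exacts [hp ω, le_rfl]

theorem prOf_congr {A : Ω → α} {B : Ω → β} {a : α} {b : β}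
    (h : ∀ ω, A ω = a ↔ B ω = b) : prOf p A a = prOf p B b :=
  Finset.sum_congr rfl fun ω _ => by rw [if_congr (h ω) rfl rfl]

theorem prOf_eq_zero {A : Ω → α} {a : α} (h : ∀ ω, A ω ≠ a) : prOf p A a = 0 :=
  Finset.sum_eq_zero fun ω _ => if_neg (h ω)

theorem prOf_mono (hp : ∀ ω, 0 ≤ p ω) {A : Ω → α} {B : Ω → β} {a : α} {b : β}
    (h : ∀ ω, A ω = a → B ω = b) : prOf p A a ≤ prOf p B b := by
  refine Finset.sum_le_sum fun ω _ => ?_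
  by_cases hA : A ω = a
  · rw [if_pos hA, if_pos (h ω hA)]
  · rw [if_neg hA]; split; exacts [hp ω, le_rfl]

theorem sum_prOf (hp : IsPmf p) (A : Ω → α) : ∑ a, prOf p A a = 1 := by
  unfold prOf
  rw [Finset.sum_comm]
  simpa [Finset.sum_ite_eq' Finset.univ] using hp.2

theorem sum_prOf_fst (A : Ω → α) (B : Ω → β) (b : β) :
    ∑ a, prOf p (fun ω => (A ω, B ω)) (a, b) = prOf p B b := by
  unfold prOf
  rw [Finset.sum_comm]
  refine Finset.sum_congr rfl fun ω _ => ?_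
  simp [Prod.ext_iff, Finset.sum_ite_eq', ite_and]

end PrOf

section CMI
variable {Ω α β γ : Type*} [Fintype Ω] [Fintype α] [Fintype β] [Fintype γ] (p : Ω → ℝ)

theorem sum_inj_support {α α' : Type*} [Fintype α] [Fintype α'] {e : α → α'}
    (he : Function.Injective e) (F : α' → ℝ)
    (hF : ∀ a', (∀ a, e a ≠ a') → F a' = 0) : ∑ a', F a' = ∑ a, F (e a) := by
  classical
  rw [← Finset.sum_image (s := Finset.univ) (g := e) (f := F) (fun a _ b _ h => he h)]
  exact (Finset.sum_subset (Finset.subset_univ _) (fun a' _ ha' => hF a'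
    (fun a hea => ha' (Finset.mem_image.2 ⟨a, Finset.mem_univ _, hea⟩)))).symm

theorem condMutualInfo_comm (A : Ω → α) (B : Ω → β) (C : Ω → γ) :
    condMutualInfo p A B C = condMutualInfo p B A C := by
  unfold condMutualInfo
  rw [Finset.sum_comm]
  refine Finset.sum_congr rfl fun b _ => Finset.sum_congr rfl fun a _ =>
    Finset.sum_congr rfl fun c _ => ?_
  have h1 : prOf p (fun ω => (A ω, B ω, C ω)) (a, b, c)
      = prOf p (fun ω => (B ω, A ω, C ω)) (b, a, c) :=
    prOf_congr p fun ω => by simp only [Prod.ext_iff]; tauto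
  rw [h1, mul_comm (prOf p (fun ω => (A ω, C ω)) (a, c)) _]

theorem condMutualInfo_inj_left {α' : Type*} [Fintype α'] {e : α → α'}
    (he : Function.Injective e) (A : Ω → α) (B : Ω → β) (C : Ω → γ) :
    condMutualInfo p (fun ω => e (A ω)) B C = condMutualInfo p A B C := by
  unfold condMutualInfo
  rw [sum_inj_support he _ ?side]
  case side =>
    intro a' ha'
    refine Finset.sum_eq_zero fun b _ => Finset.sum_eq_zero fun c _ => ?_
    have : prOf p (fun ω => (e (A ω), B ω, C ω)) (a', b, c) = 0 :=
      prOf_eq_zero p fun ω h => ha' (A ω) (Prod.ext_iff.1 h).1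
    rw [this, zero_mul]
  refine Finset.sum_congr rfl fun a _ => Finset.sum_congr rfl fun b _ =>
    Finset.sum_congr rfl fun c _ => ?_
  have h1 : prOf p (fun ω => (e (A ω), B ω, C ω)) (e a, b, c)
      = prOf p (fun ω => (A ω, B ω, C ω)) (a, b, c) :=
    prOf_congr p fun ω => by simp only [Prod.ext_iff, he.eq_iff]
  have h2 : prOf p (fun ω => (e (A ω), C ω)) (e a, c)
      = prOf p (fun ω => (A ω, C ω)) (a, c) :=
    prOf_congr p fun ω => by simp only [Prod.ext_iff, he.eq_iff]
  rw [h1, h2]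

theorem condMutualInfo_inj_cond {γ' : Type*} [Fintype γ'] {e : γ → γ'}
    (he : Function.Injective e) (A : Ω → α) (B : Ω → β) (C : Ω → γ) :
    condMutualInfo p A B (fun ω => e (C ω)) = condMutualInfo p A B C := by
  unfold condMutualInfo
  refine Finset.sum_congr rfl fun a _ => Finset.sum_congr rfl fun b _ => ?_
  rw [sum_inj_support he _ ?side]
  case side =>
    intro c' hc'
    have : prOf p (fun ω => (A ω, B ω, e (C ω))) (a, b, c') = 0 :=
      prOf_eq_zero p fun ω h => hc' (C ω) (Prod.ext_iff.1 (Prod.ext_iff.1 h).2).2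
    rw [this, zero_mul]
  refine Finset.sum_congr rfl fun c _ => ?_
  have h1 : prOf p (fun ω => (A ω, B ω, e (C ω))) (a, b, e c)
      = prOf p (fun ω => (A ω, B ω, C ω)) (a, b, c) :=
    prOf_congr p fun ω => by simp only [Prod.ext_iff, he.eq_iff]
  have h2 : prOf p (fun ω => e (C ω)) (e c) = prOf p C c :=
    prOf_congr p fun ω => by simp only [he.eq_iff]
  have h3 : prOf p (fun ω => (A ω, e (C ω))) (a, e c)
      = prOf p (fun ω => (A ω, C ω)) (a, c) :=
    prOf_congr p fun ω => by simp only [Prod.ext_iff, he.eq_iff]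
  have h4 : prOf p (fun ω => (B ω, e (C ω))) (b, e c)
      = prOf p (fun ω => (B ω, C ω)) (b, c) :=
    prOf_congr p fun ω => by simp only [Prod.ext_iff, he.eq_iff]
  rw [h1, h2, h3, h4]

end CMI

section CMI2
variable {Ω α β γ : Type*} [Fintype Ω] [Fintype α] [Fintype β] [Fintype γ] (p : Ω → ℝ)

theorem condMutualInfo_nonneg (hp : IsPmf p) (A : Ω → α) (B : Ω → β) (C : Ω → γ) :
    0 ≤ condMutualInfo p A B C := by
  classical
  set P : α × β × γ → ℝ := fun x => prOf p (fun ω => (A ω, B ω, C ω)) x with hPdef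
  set Pc : γ → ℝ := fun c => prOf p C c with hPcdef
  set Pac : α → γ → ℝ := fun a c => prOf p (fun ω => (A ω, C ω)) (a, c) with hPacdef
  set Pbc : β → γ → ℝ := fun b c => prOf p (fun ω => (B ω, C ω)) (b, c) with hPbcdef
  have hPnn : ∀ x, 0 ≤ P x := fun x => prOf_nonneg p hp.1 _ _
  have hPcnn : ∀ c, 0 ≤ Pc c := fun c => prOf_nonneg p hp.1 _ _
  have hPacnn : ∀ a c, 0 ≤ Pac a c := fun a c => prOf_nonneg p hp.1 _ _
  have hPbcnn : ∀ b c, 0 ≤ Pbc b c := fun b c => prOf_nonneg p hp.1 _ _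
  have hmc : ∀ x : α × β × γ, P x ≤ Pc x.2.2 :=
    fun x => prOf_mono p hp.1 fun ω hx => by rw [← hx]
  have hmac : ∀ x : α × β × γ, P x ≤ Pac x.1 x.2.2 :=
    fun x => prOf_mono p hp.1 fun ω hx => by rw [← hx]
  have hmbc : ∀ x : α × β × γ, P x ≤ Pbc x.2.1 x.2.2 :=
    fun x => prOf_mono p hp.1 fun ω hx => by rw [← hx]
  have hsum : condMutualInfo p A B C
      = ∑ x : α × β × γ, P x * Real.logb 2 (P x * Pc x.2.2 / (Pac x.1 x.2.2 * Pbc x.2.1 x.2.2)) := by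
    unfold condMutualInfo
    simp only [Fintype.sum_prod_type]
    rfl
  set S := Finset.univ.filter (fun x : α × β × γ => 0 < P x) with hSdef
  have hScm : ∀ x, x ∈ S → 0 < P x := fun x hx => (Finset.mem_filter.1 hx).2
  have hS0 : ∀ x ∈ (Finset.univ : Finset (α × β × γ)), x ∉ S →
      P x * Real.logb 2 (P x * Pc x.2.2 / (Pac x.1 x.2.2 * Pbc x.2.1 x.2.2)) = 0 := by
    intro x _ hx
    have : P x = 0 := le_antisymm (by simpa [hSdef] using hx) (hPnn x)
    rw [this, zero_mul]
  have hsumS : condMutualInfo p A B C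
      = ∑ x ∈ S, P x * Real.logb 2 (P x * Pc x.2.2 / (Pac x.1 x.2.2 * Pbc x.2.1 x.2.2)) := by
    rw [hsum, Finset.sum_subset (Finset.subset_univ S) hS0]
  -- positivity on S
  have hposc : ∀ x ∈ S, 0 < Pc x.2.2 := fun x hx => lt_of_lt_of_le (hScm x hx) (hmc x)
  have hposac : ∀ x ∈ S, 0 < Pac x.1 x.2.2 := fun x hx => lt_of_lt_of_le (hScm x hx) (hmac x)
  have hposbc : ∀ x ∈ S, 0 < Pbc x.2.1 x.2.2 := fun x hx => lt_of_lt_of_le (hScm x hx) (hmbc x)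
  -- flip the logarithm
  have hflip : ∀ x ∈ S, P x * Real.logb 2 (P x * Pc x.2.2 / (Pac x.1 x.2.2 * Pbc x.2.1 x.2.2))
      = -(P x * Real.logb 2 (Pac x.1 x.2.2 * Pbc x.2.1 x.2.2 / (P x * Pc x.2.2))) := by
    intro x hx
    rw [show P x * Pc x.2.2 / (Pac x.1 x.2.2 * Pbc x.2.1 x.2.2)
        = (Pac x.1 x.2.2 * Pbc x.2.1 x.2.2 / (P x * Pc x.2.2))⁻¹ from (inv_div _ _).symm,
      Real.logb_inv]
    ring
  -- Jensen
  have hw1 : ∑ x ∈ S, P x = 1 := by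
    rw [Finset.sum_subset (Finset.subset_univ S) (fun x _ hx =>
      le_antisymm (by simpa [hSdef] using hx) (hPnn x))]
    exact sum_prOf p hp _
  have hmem : ∀ x ∈ S, Pac x.1 x.2.2 * Pbc x.2.1 x.2.2 / (P x * Pc x.2.2) ∈ Set.Ioi (0:ℝ) :=
    fun x hx => div_pos (mul_pos (hposac x hx) (hposbc x hx))
      (mul_pos (hScm x hx) (hposc x hx))
  have jensen := (strictConcaveOn_log_Ioi.concaveOn).le_map_sum
    (fun x _ => hPnn x) hw1 hmem
  have hZnn : 0 ≤ ∑ x ∈ S, Pac x.1 x.2.2 * Pbc x.2.1 x.2.2 / Pc x.2.2 :=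
    Finset.sum_nonneg fun x _ =>
      div_nonneg (mul_nonneg (hPacnn _ _) (hPbcnn _ _)) (hPcnn _)
  have hZeq : ∑ x ∈ S, P x • (Pac x.1 x.2.2 * Pbc x.2.1 x.2.2 / (P x * Pc x.2.2))
      = ∑ x ∈ S, Pac x.1 x.2.2 * Pbc x.2.1 x.2.2 / Pc x.2.2 := by
    refine Finset.sum_congr rfl fun x hx => ?_
    have h1 : P x ≠ 0 := (hScm x hx).ne'
    have h2 : Pc x.2.2 ≠ 0 := (hposc x hx).ne'
    rw [smul_eq_mul]
    field_simp
  have hZ1 : ∑ x ∈ S, Pac x.1 x.2.2 * Pbc x.2.1 x.2.2 / Pc x.2.2 ≤ 1 := by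
    have step1 : (∑ x ∈ S, Pac x.1 x.2.2 * Pbc x.2.1 x.2.2 / Pc x.2.2)
        ≤ ∑ x : α × β × γ,
          (if 0 < Pc x.2.2 then Pac x.1 x.2.2 * Pbc x.2.1 x.2.2 / Pc x.2.2 else 0) := by
      have heq : ∀ x ∈ S, Pac x.1 x.2.2 * Pbc x.2.1 x.2.2 / Pc x.2.2
          = if 0 < Pc x.2.2 then Pac x.1 x.2.2 * Pbc x.2.1 x.2.2 / Pc x.2.2 else 0 :=
        fun x hx => (if_pos (hposc x hx)).symm
      rw [Finset.sum_congr rfl heq]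
      refine Finset.sum_le_sum_of_subset_of_nonneg (Finset.subset_univ S) (fun x _ _ => ?_)
      split
      · exact div_nonneg (mul_nonneg (hPacnn _ _) (hPbcnn _ _)) (hPcnn _)
      · exact le_rfl
    have step2 : (∑ x : α × β × γ,
          (if 0 < Pc x.2.2 then Pac x.1 x.2.2 * Pbc x.2.1 x.2.2 / Pc x.2.2 else 0))
        = ∑ c, (if 0 < Pc c then Pc c else 0) := by
      simp only [Fintype.sum_prod_type]
      have swap1 : ∀ a : α, (∑ b, ∑ c, (if 0 < Pc c then Pac a c * Pbc b c / Pc c else 0))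
          = ∑ c, ∑ b, (if 0 < Pc c then Pac a c * Pbc b c / Pc c else 0) :=
        fun a => Finset.sum_comm
      simp only [swap1]
      rw [Finset.sum_comm]
      refine Finset.sum_congr rfl fun c _ => ?_
      by_cases h : 0 < Pc c
      · simp only [if_pos h]
        have hb : ∑ b, Pbc b c = Pc c := sum_prOf_fst p B C c
        have ha : ∑ a, Pac a c = Pc c := sum_prOf_fst p A C c
        calc ∑ a, ∑ b, Pac a c * Pbc b c / Pc c
            = ∑ a, Pac a c * ((∑ b, Pbc b c) / Pc c) := by
              refine Finset.sum_congr rfl fun a _ => ?_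
              simp only [Finset.sum_div, Finset.mul_sum, mul_div_assoc]
          _ = ∑ a, Pac a c := by rw [hb, div_self h.ne']; simp
          _ = Pc c := ha
      · simp only [if_neg h, Finset.sum_const_zero]
    refine (step1.trans_eq step2).trans ?_
    calc ∑ c, (if 0 < Pc c then Pc c else 0) ≤ ∑ c, Pc c :=
          Finset.sum_le_sum fun c _ => by split; exacts [le_rfl, hPcnn c]
      _ = 1 := sum_prOf p hp C
  have hmain : ∑ x ∈ S, P x *
      Real.log (Pac x.1 x.2.2 * Pbc x.2.1 x.2.2 / (P x * Pc x.2.2)) ≤ 0 := by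
    have h1 : Real.log (∑ x ∈ S, P x • (Pac x.1 x.2.2 * Pbc x.2.1 x.2.2 / (P x * Pc x.2.2)))
        ≤ 0 := by
      rw [hZeq]; exact Real.log_nonpos hZnn hZ1
    have := jensen.trans h1
    simpa [smul_eq_mul] using this
  rw [hsumS, Finset.sum_congr rfl hflip, Finset.sum_neg_distrib, neg_nonneg]
  simp only [Real.logb]
  rw [show ∑ x ∈ S, P x * (Real.log (Pac x.1 x.2.2 * Pbc x.2.1 x.2.2 / (P x * Pc x.2.2))
        / Real.log 2)
      = (∑ x ∈ S, P x * Real.log (Pac x.1 x.2.2 * Pbc x.2.1 x.2.2 / (P x * Pc x.2.2)))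
        / Real.log 2 from by
    rw [Finset.sum_div]; exact Finset.sum_congr rfl fun x _ => (mul_div_assoc _ _ _).symm]
  exact div_nonpos_of_nonpos_of_nonneg hmain (Real.log_nonneg one_le_two)
end CMI2

section Chain
variable {Ω α β β' γ : Type*} [Fintype Ω] [Fintype α] [Fintype β] [Fintype β'] [Fintype γ]
  (p : Ω → ℝ)

theorem condMutualInfo_chain (hp : ∀ ω, 0 ≤ p ω)
    (A : Ω → α) (B : Ω → β) (B' : Ω → β') (C : Ω → γ) :
    condMutualInfo p A (fun ω => (B ω, B' ω)) C
      = condMutualInfo p A B' C + condMutualInfo p A B (fun ω => (B' ω, C ω)) := by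
  classical
  set q : α → β → β' → γ → ℝ :=
    fun a b b' c => prOf p (fun ω => (A ω, B ω, B' ω, C ω)) (a, b, b', c) with hqdef
  set Pab'c : α → β' → γ → ℝ :=
    fun a b' c => prOf p (fun ω => (A ω, B' ω, C ω)) (a, b', c) with h1def
  set Pac : α → γ → ℝ := fun a c => prOf p (fun ω => (A ω, C ω)) (a, c) with h2def
  set Pbb'c : β → β' → γ → ℝ :=
    fun b b' c => prOf p (fun ω => (B ω, B' ω, C ω)) (b, b', c) with h3def
  set Pb'c : β' → γ → ℝ := fun b' c => prOf p (fun ω => (B' ω, C ω)) (b', c) with h4def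
  set Pc : γ → ℝ := fun c => prOf p C c with h5def
  have e1 : ∀ a b b' c, prOf p (fun ω => (A ω, (B ω, B' ω), C ω)) (a, (b, b'), c)
      = q a b b' c := fun a b b' c =>
    prOf_congr p fun ω => by simp only [Prod.ext_iff]; tauto
  have e2 : ∀ b b' c, prOf p (fun ω => ((B ω, B' ω), C ω)) ((b, b'), c)
      = Pbb'c b b' c := fun b b' c =>
    prOf_congr p fun ω => by simp only [Prod.ext_iff]; tauto
  have hmarg : ∀ a b' c, (∑ b, q a b b' c) = Pab'c a b' c := by
    intro a b' c
    have e3 : ∀ b, q a b b' c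
        = prOf p (fun ω => (B ω, (A ω, B' ω, C ω))) (b, (a, b', c)) := fun b =>
      prOf_congr p fun ω => by simp only [Prod.ext_iff]; tauto
    simp only [e3]
    exact sum_prOf_fst p B (fun ω => (A ω, B' ω, C ω)) (a, b', c)
  unfold condMutualInfo
  simp only [Fintype.sum_prod_type, e1, e2]
  have reorder : ∀ f : α → β → β' → γ → ℝ,
      (∑ a, ∑ b, ∑ b', ∑ c, f a b b' c) = ∑ a, ∑ b', ∑ c, ∑ b, f a b b' c := by
    intro f
    refine Finset.sum_congr rfl fun a _ => ?_
    rw [Finset.sum_comm]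
    exact Finset.sum_congr rfl fun b' _ => Finset.sum_comm
  rw [reorder, reorder]
  simp only [← Finset.sum_add_distrib]
  refine Finset.sum_congr rfl fun a _ => Finset.sum_congr rfl fun b' _ =>
    Finset.sum_congr rfl fun c _ => ?_
  have key : ∀ b, q a b b' c *
        Real.logb 2 (q a b b' c * Pc c / (Pac a c * Pbb'c b b' c))
      = q a b b' c * Real.logb 2 (Pab'c a b' c * Pc c / (Pac a c * Pb'c b' c))
        + q a b b' c * Real.logb 2 (q a b b' c * Pb'c b' c / (Pab'c a b' c * Pbb'c b b' c)) := by
    intro b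
    by_cases hq0 : q a b b' c = 0
    · rw [hq0]; ring
    have hqpos : 0 < q a b b' c := lt_of_le_of_ne (prOf_nonneg p hp _ _) (Ne.symm hq0)
    have hPc : 0 < Pc c := lt_of_lt_of_le hqpos
      (prOf_mono p hp fun ω h => congrArg (fun x : α × β × β' × γ => x.2.2.2) h)
    have hPac : 0 < Pac a c := lt_of_lt_of_le hqpos
      (prOf_mono p hp fun ω h => congrArg (fun x : α × β × β' × γ => (x.1, x.2.2.2)) h)
    have hPab'c : 0 < Pab'c a b' c := lt_of_lt_of_le hqpos
      (prOf_mono p hp fun ω h => congrArg (fun x : α × β × β' × γ => (x.1, x.2.2.1, x.2.2.2)) h)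
    have hPbb'c : 0 < Pbb'c b b' c := lt_of_lt_of_le hqpos
      (prOf_mono p hp fun ω h => congrArg (fun x : α × β × β' × γ => (x.2.1, x.2.2.1, x.2.2.2)) h)
    have hPb'c : 0 < Pb'c b' c := lt_of_lt_of_le hqpos
      (prOf_mono p hp fun ω h => congrArg (fun x : α × β × β' × γ => (x.2.2.1, x.2.2.2)) h)
    have hL : 0 < Pab'c a b' c * Pc c / (Pac a c * Pb'c b' c) :=
      div_pos (mul_pos hPab'c hPc) (mul_pos hPac hPb'c)
    have hL2 : 0 < q a b b' c * Pb'c b' c / (Pab'c a b' c * Pbb'c b b' c) :=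
      div_pos (mul_pos hqpos hPb'c) (mul_pos hPab'c hPbb'c)
    have hprod : q a b b' c * Pc c / (Pac a c * Pbb'c b b' c)
        = (Pab'c a b' c * Pc c / (Pac a c * Pb'c b' c))
          * (q a b b' c * Pb'c b' c / (Pab'c a b' c * Pbb'c b b' c)) := by
      field_simp
    rw [hprod, Real.logb_mul hL.ne' hL2.ne', mul_add]
  rw [Finset.sum_congr rfl fun b _ => key b, Finset.sum_add_distrib, ← Finset.sum_mul,
    hmarg a b' c]

end Chain

section Key
variable {Ω α β γ : Type*} [Fintype Ω] [Fintype α] [Fintype β] [Fintype γ] (p : Ω → ℝ)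

theorem condMutualInfo_inj_right {β'' : Type*} [Fintype β''] {e : β → β''}
    (he : Function.Injective e) (A : Ω → α) (B : Ω → β) (C : Ω → γ) :
    condMutualInfo p A (fun ω => e (B ω)) C = condMutualInfo p A B C := by
  rw [condMutualInfo_comm, condMutualInfo_inj_left p he, condMutualInfo_comm]

theorem condMutualInfo_key {α' β' : Type*} [Fintype α'] [Fintype β'] (hp : IsPmf p)
    (A : Ω → α) (B : Ω → β) (C : Ω → γ) (f : α → α') (g : β → β') :
    condMutualInfo p (fun ω => f (A ω)) (fun ω => g (B ω)) C
      + condMutualInfo p A B (fun ω => (f (A ω), g (B ω), C ω))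
      ≤ condMutualInfo p A B C := by
  have hef : Function.Injective (fun a : α => (a, f a)) := fun a1 a2 h => (Prod.ext_iff.1 h).1
  have heg : Function.Injective (fun b : β => (b, g b)) := fun b1 b2 h => (Prod.ext_iff.1 h).1
  have s1 : condMutualInfo p A B C = condMutualInfo p A (fun ω => (B ω, g (B ω))) C :=
    (condMutualInfo_inj_right p heg A B C).symm
  have s2 := condMutualInfo_chain p hp.1 A B (fun ω => g (B ω)) C
  have t1 : condMutualInfo p (fun ω => f (A ω)) (fun ω => g (B ω)) C
      ≤ condMutualInfo p A (fun ω => g (B ω)) C := by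
    have a1 : condMutualInfo p A (fun ω => g (B ω)) C
        = condMutualInfo p (fun ω => g (B ω)) (fun ω => (A ω, f (A ω))) C := by
      rw [condMutualInfo_inj_right p hef, condMutualInfo_comm]
    have a2 := condMutualInfo_chain p hp.1 (fun ω => g (B ω)) A (fun ω => f (A ω)) C
    have a3 := condMutualInfo_nonneg p hp (fun ω => g (B ω)) A (fun ω => (f (A ω), C ω))
    have a4 : condMutualInfo p (fun ω => g (B ω)) (fun ω => f (A ω)) C
        = condMutualInfo p (fun ω => f (A ω)) (fun ω => g (B ω)) C :=
      condMutualInfo_comm p _ _ _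
    linarith
  have t2 : condMutualInfo p A B (fun ω => (f (A ω), g (B ω), C ω))
      ≤ condMutualInfo p A B (fun ω => (g (B ω), C ω)) := by
    have b1 : condMutualInfo p A B (fun ω => (g (B ω), C ω))
        = condMutualInfo p B (fun ω => (A ω, f (A ω))) (fun ω => (g (B ω), C ω)) := by
      rw [condMutualInfo_inj_right p hef, condMutualInfo_comm]
    have b2 := condMutualInfo_chain p hp.1 B A (fun ω => f (A ω)) (fun ω => (g (B ω), C ω))
    have b3 := condMutualInfo_nonneg p hp B (fun ω => f (A ω)) (fun ω => (g (B ω), C ω))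
    have b4 : condMutualInfo p B A (fun ω => (f (A ω), g (B ω), C ω))
        = condMutualInfo p A B (fun ω => (f (A ω), g (B ω), C ω)) :=
      condMutualInfo_comm p _ _ _
    linarith
  linarith

end Key

/-- Dueck's wringing lemma: if `I(X₁ⁿ;X₂ⁿ|U) ≤ nδ` then there is a set `T` of at most
`nδ/ε` coordinates such that conditioning additionally on `(X₁^T, X₂^T)` makes every
remaining per-coordinate conditional mutual information at most `ε`. -/
theorem dueck_wringing {Ω 𝒰 𝒳₁ 𝒳₂ : Type*} [Fintype Ω] [Fintype 𝒰] [Fintype 𝒳₁]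
    [Fintype 𝒳₂] (n : ℕ) (hn : 1 ≤ n) (p : Ω → ℝ) (hp : IsPmf p)
    (U : Ω → 𝒰) (X₁ : Ω → Fin n → 𝒳₁) (X₂ : Ω → Fin n → 𝒳₂)
    (ε δ : ℝ) (hε : 0 < ε) (hδ : 0 < δ)
    (h : condMutualInfo p X₁ X₂ U ≤ n * δ) :
    ∃ T : Finset (Fin n), (T.card : ℝ) ≤ n * δ / ε ∧
      ∀ t ∉ T, condMutualInfo p (fun ω => X₁ ω t) (fun ω => X₂ ω t)
        (fun ω => (U ω, fun s : T => X₁ ω s, fun s : T => X₂ ω s)) ≤ ε := by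
  classical
  -- the empty-set conditioning agrees with conditioning on U alone
  have hbase : condMutualInfo p X₁ X₂
      (fun ω => (U ω, fun s : (∅ : Finset (Fin n)) => X₁ ω s,
        fun s : (∅ : Finset (Fin n)) => X₂ ω s))
      = condMutualInfo p X₁ X₂ U := by
    set e : 𝒰 → 𝒰 × (↥(∅ : Finset (Fin n)) → 𝒳₁) × (↥(∅ : Finset (Fin n)) → 𝒳₂) :=
      fun u => (u, fun s => absurd s.2 (Finset.notMem_empty _),
        fun s => absurd s.2 (Finset.notMem_empty _)) with hedef
    have he : Function.Injective e := fun u v huv => congrArg Prod.fst huv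
    have hC : (fun ω => (U ω, fun s : (∅ : Finset (Fin n)) => X₁ ω s,
        fun s : (∅ : Finset (Fin n)) => X₂ ω s)) = fun ω => e (U ω) := by
      funext ω
      simp only [hedef]
      have h1 : (fun s : (∅ : Finset (Fin n)) => X₁ ω s)
          = (fun s : ↥(∅ : Finset (Fin n)) => absurd s.2 (Finset.notMem_empty _)) :=
        funext fun s => absurd s.2 (Finset.notMem_empty _)
      have h2 : (fun s : (∅ : Finset (Fin n)) => X₂ ω s)
          = (fun s : ↥(∅ : Finset (Fin n)) => absurd s.2 (Finset.notMem_empty _)) :=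
        funext fun s => absurd s.2 (Finset.notMem_empty _)
      rw [h1, h2]
    rw [hC, condMutualInfo_inj_cond p he]
  -- one step of the wringing procedure
  have hstep : ∀ (T : Finset (Fin n)) (t : Fin n), t ∉ T →
      condMutualInfo p (fun ω => X₁ ω t) (fun ω => X₂ ω t)
        (fun ω => (U ω, fun s : T => X₁ ω s, fun s : T => X₂ ω s))
      + condMutualInfo p X₁ X₂
        (fun ω => (U ω, fun s : (insert t T : Finset (Fin n)) => X₁ ω s,
          fun s : (insert t T : Finset (Fin n)) => X₂ ω s))
      ≤ condMutualInfo p X₁ X₂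
        (fun ω => (U ω, fun s : T => X₁ ω s, fun s : T => X₂ ω s)) := by
    intro T t ht
    have hkey := condMutualInfo_key p hp X₁ X₂
      (fun ω => (U ω, fun s : T => X₁ ω s, fun s : T => X₂ ω s))
      (fun x => x t) (fun x => x t)
    have hEq : condMutualInfo p X₁ X₂
        (fun ω => (U ω, fun s : (insert t T : Finset (Fin n)) => X₁ ω s,
          fun s : (insert t T : Finset (Fin n)) => X₂ ω s))
        = condMutualInfo p X₁ X₂
          (fun ω => (X₁ ω t, X₂ ω t,
            (U ω, fun s : T => X₁ ω s, fun s : T => X₂ ω s))) := by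
      set e : 𝒳₁ × 𝒳₂ × (𝒰 × (↥T → 𝒳₁) × (↥T → 𝒳₂))
          → 𝒰 × (↥(insert t T : Finset (Fin n)) → 𝒳₁)
            × (↥(insert t T : Finset (Fin n)) → 𝒳₂) := fun z =>
        (z.2.2.1, fun s => if hs : (s : Fin n) ∈ T then z.2.2.2.1 ⟨s, hs⟩ else z.1,
          fun s => if hs : (s : Fin n) ∈ T then z.2.2.2.2 ⟨s, hs⟩ else z.2.1) with hedef
      have he : Function.Injective e := by
        rintro ⟨x1, x2, u, f1, f2⟩ ⟨y1, y2, v, g1, g2⟩ hxy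
        simp only [hedef, Prod.mk.injEq] at hxy
        obtain ⟨hu, hf, hg⟩ := hxy
        have hx1 : x1 = y1 := by
          have := congrFun hf ⟨t, Finset.mem_insert_self t T⟩
          simpa [ht] using this
        have hx2 : x2 = y2 := by
          have := congrFun hg ⟨t, Finset.mem_insert_self t T⟩
          simpa [ht] using this
        have hf1 : f1 = g1 := by
          funext s
          have := congrFun hf ⟨s.1, Finset.mem_insert_of_mem s.2⟩
          simpa [s.2] using this
        have hf2 : f2 = g2 := by
          funext s
          have := congrFun hg ⟨s.1, Finset.mem_insert_of_mem s.2⟩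
          simpa [s.2] using this
        simp [hu, hx1, hx2, hf1, hf2]
      have hC : (fun ω => (U ω, fun s : (insert t T : Finset (Fin n)) => X₁ ω s,
            fun s : (insert t T : Finset (Fin n)) => X₂ ω s))
          = fun ω => e (X₁ ω t, X₂ ω t,
              (U ω, fun s : T => X₁ ω s, fun s : T => X₂ ω s)) := by
        funext ω
        simp only [hedef]
        have h1 : (fun s : (insert t T : Finset (Fin n)) => X₁ ω s)
            = fun s : ↥(insert t T : Finset (Fin n)) =>
                if hs : (s : Fin n) ∈ T then X₁ ω s else X₁ ω t := by
          funext s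
          by_cases hs : (s : Fin n) ∈ T
          · rw [dif_pos hs]
          · rw [dif_neg hs]
            have hst : (s : Fin n) = t := by
              rcases Finset.mem_insert.1 s.2 with h' | h'
              · exact h'
              · exact absurd h' hs
            rw [hst]
        have h2 : (fun s : (insert t T : Finset (Fin n)) => X₂ ω s)
            = fun s : ↥(insert t T : Finset (Fin n)) =>
                if hs : (s : Fin n) ∈ T then X₂ ω s else X₂ ω t := by
          funext s
          by_cases hs : (s : Fin n) ∈ T
          · rw [dif_pos hs]
          · rw [dif_neg hs]
            have hst : (s : Fin n) = t := by
              rcases Finset.mem_insert.1 s.2 with h' | h'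
              · exact h'
              · exact absurd h' hs
            rw [hst]
        rw [h1, h2]
      rw [hC, condMutualInfo_inj_cond p he]
    rw [hEq]
    exact hkey
  -- main recursion
  have hrec : ∀ (k : ℕ) (T : Finset (Fin n)), n ≤ T.card + k →
      condMutualInfo p X₁ X₂
        (fun ω => (U ω, fun s : T => X₁ ω s, fun s : T => X₂ ω s))
        + ε * T.card ≤ n * δ →
      ∃ T₀ : Finset (Fin n), (T₀.card : ℝ) ≤ n * δ / ε ∧
        ∀ t ∉ T₀, condMutualInfo p (fun ω => X₁ ω t) (fun ω => X₂ ω t)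
          (fun ω => (U ω, fun s : T₀ => X₁ ω s, fun s : T₀ => X₂ ω s)) ≤ ε := by
    intro k
    induction k with
    | zero =>
      intro T hcard hJ
      have hT : T = Finset.univ := Finset.eq_univ_of_card T
        (le_antisymm (Finset.card_le_univ T) (by simpa using hcard))
      refine ⟨T, ?_, fun t htT => absurd (hT ▸ Finset.mem_univ t) htT⟩
      have hJnn := condMutualInfo_nonneg p hp X₁ X₂
        (fun ω => (U ω, fun s : T => X₁ ω s, fun s : T => X₂ ω s))
      rw [le_div_iff₀ hε, mul_comm]
      linarith
    | succ k ih =>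
      intro T hcard hJ
      by_cases hgood : ∀ t ∉ T, condMutualInfo p (fun ω => X₁ ω t) (fun ω => X₂ ω t)
          (fun ω => (U ω, fun s : T => X₁ ω s, fun s : T => X₂ ω s)) ≤ ε
      · refine ⟨T, ?_, hgood⟩
        have hJnn := condMutualInfo_nonneg p hp X₁ X₂
          (fun ω => (U ω, fun s : T => X₁ ω s, fun s : T => X₂ ω s))
        rw [le_div_iff₀ hε, mul_comm]
        linarith
      · push_neg at hgood
        obtain ⟨t, ht, hIt⟩ := hgood
        refine ih (insert t T) ?_ ?_
        · rw [Finset.card_insert_of_notMem ht]; omega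
        · have hst := hstep T t ht
          rw [Finset.card_insert_of_notMem ht]
          push_cast
          linarith
  refine hrec n ∅ (by simp) ?_
  rw [hbase]
  simpa using h
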